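/- Let X be a regular T1 space with at least two points such that there exists a sequence of nonempty open subsets of X converging to some point p ∈ X, and let κ be an infinite cardinal. Then the following statements are equivalent: (1) X^κ is OHD; (2) Σ(X,p,κ) is OHD; (3) σ(X,p,κ) is OHD; (4) κ is uncountable. -/
import Mathlib


open Filter Topology Set

/-- `x : ℕ → X` has no convergent subsequence. -/
def NoConvSubseq {X : Type*} [TopologicalSpace X] (x : ℕ → X) : Prop :=
  ∀ φ : ℕ → ℕ, StrictMono φ → ∀ y : X, ¬ Filter.Tendsto (x ∘ φ) Filter.atTop (nhds y)

/-- Selectively highly divergent. -/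
def SHD (X : Type*) [TopologicalSpace X] : Prop :=
  ∀ U : ℕ → Set X, (∀ n, IsOpen (U n)) → (∀ n, (U n).Nonempty) →
    ∃ x : ℕ → X, (∀ n, x n ∈ U n) ∧ NoConvSubseq x

/-- Weakly selectively highly divergent. -/
def WSHD (X : Type*) [TopologicalSpace X] : Prop :=
  ∀ U : ℕ → Set X, (∀ n, IsOpen (U n)) → (∀ n, (U n).Nonempty) →
    ∃ A : Set ℕ, A.Infinite ∧ ∃ x : ℕ → X, (∀ n ∈ A, x n ∈ U n) ∧
      ∀ φ : ℕ → ℕ, StrictMono φ → (∀ n, φ n ∈ A) →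
        ∀ y : X, ¬ Filter.Tendsto (x ∘ φ) Filter.atTop (nhds y)

/-- A sequence of nonempty open sets converges to a point. -/
def OpenSeqTendsto {X : Type*} [TopologicalSpace X] (U : ℕ → Set X) (x : X) : Prop :=
  ∀ V : Set X, IsOpen V → x ∈ V → ∃ m : ℕ, ∀ n ≥ m, U n ⊆ V

/-- Openly highly divergent: no sequence of nonempty open sets converges to a point. -/
def OHD (X : Type*) [TopologicalSpace X] : Prop :=
  ¬ ∃ (U : ℕ → Set X) (x : X),
      (∀ n, IsOpen (U n)) ∧ (∀ n, (U n).Nonempty) ∧ OpenSeqTendsto U x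

/-- `x` has a countable local (neighbourhood) base. -/
def HasCountableLocalBase {X : Type*} [TopologicalSpace X] (x : X) : Prop :=
  ∃ B : Set (Set X), B.Countable ∧ (∀ V ∈ B, IsOpen V ∧ x ∈ V) ∧
    ∀ U : Set X, IsOpen U → x ∈ U → ∃ V ∈ B, V ⊆ U

/-- `x` has a countable local π-base. -/
def HasCountableLocalPiBase {X : Type*} [TopologicalSpace X] (x : X) : Prop :=
  ∃ B : Set (Set X), B.Countable ∧ (∀ V ∈ B, IsOpen V ∧ V.Nonempty) ∧
    ∀ U : Set X, IsOpen U → x ∈ U → ∃ V ∈ B, V ⊆ U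

/-- UC: every point has uncountable character. -/
def UC (X : Type*) [TopologicalSpace X] : Prop := ∀ x : X, ¬ HasCountableLocalBase x

/-- π-UC: every point has uncountable π-character. -/
def PiUC (X : Type*) [TopologicalSpace X] : Prop := ∀ x : X, ¬ HasCountableLocalPiBase x

/-- Sequentially discrete: every convergent sequence is eventually constant. -/
def SD (X : Type*) [TopologicalSpace X] : Prop :=
  ∀ (x : ℕ → X) (y : X), Filter.Tendsto x Filter.atTop (nhds y) →
    ∃ m : ℕ, ∀ n ≥ m, x n = x m

/-- The Pixley–Roy hyperspace: nonempty finite subsets of `X`. -/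
def PR (X : Type*) : Type _ := {F : Set X // F.Finite ∧ F.Nonempty}

/-- The basic sets `[F, U]` of the Pixley–Roy topology. -/
def PRBasic {X : Type*} (F U : Set X) : Set (PR X) :=
  {G : PR X | F ⊆ G.1 ∧ G.1 ⊆ U}

instance PR.instTopologicalSpace {X : Type*} [TopologicalSpace X] :
    TopologicalSpace (PR X) :=
  TopologicalSpace.generateFrom
    {S | ∃ (F : PR X) (U : Set X), IsOpen U ∧ S = PRBasic F.1 U}

/-- P-space: countable intersections of open sets are open. -/
def PSpace (X : Type*) [TopologicalSpace X] : Prop :=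
  ∀ U : ℕ → Set X, (∀ n, IsOpen (U n)) → IsOpen (⋂ n, U n)

/-- `Σ(Y, p, κ)`: points of `Y^κ` differing from the constant `p` on countably many coordinates. -/
def SigmaProd (Y : Type*) (p : Y) (κ : Type*) : Set (κ → Y) :=
  {x | {α : κ | x α ≠ p}.Countable}

/-- `σ(Y, p, κ)`: points of `Y^κ` differing from the constant `p` on finitely many coordinates. -/
def SmallSigmaProd (Y : Type*) (p : Y) (κ : Type*) : Set (κ → Y) :=
  {x | {α : κ | x α ≠ p}.Finite}


section AuxStatement9

lemma aux9_ohd_pi_of_uncountable {X : Type*} [TopologicalSpace X] [T1Space X] [Nontrivial X]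
    (κ : Type*) [Uncountable κ] : OHD (κ → X) := by
  classical
  rintro ⟨V, x, hVo, hVne, hconv⟩
  choose f hf using hVne
  choose I u hu hIV using fun n => isOpen_pi_iff.mp (hVo n) _ (hf n)
  obtain ⟨α, hα⟩ : ∃ α : κ, α ∉ ⋃ n, (I n : Set κ) := by
    by_contra h
    push_neg at h
    have h1 : (Set.univ : Set κ).Countable := by
      rw [← Set.eq_univ_of_forall h]
      exact Set.countable_iUnion fun n => (I n).countable_toSet
    exact not_countable (Set.countable_univ_iff.mp h1)
  obtain ⟨q, hq⟩ := exists_ne (x α)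
  obtain ⟨m, hm⟩ := hconv ((fun y : κ → X => y α) ⁻¹' {q}ᶜ)
    (isOpen_compl_singleton.preimage (continuous_apply α)) (by simpa using hq.symm)
  have hb : Function.update (f m) α q ∈ (I m : Set κ).pi (u m) := by
    intro i hi
    have hne : i ≠ α := fun h => hα (Set.mem_iUnion.mpr ⟨m, h ▸ hi⟩)
    rw [Function.update_of_ne hne]
    exact (hu m i hi).2
  have h2 := hm m le_rfl (hIV m hb)
  simp [Function.update_self] at h2

lemma aux9_ohd_subtype_of_uncountable {X : Type*} [TopologicalSpace X] [T1Space X] [Nontrivial X]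
    {κ : Type*} [Uncountable κ] [DecidableEq κ] (S : Set (κ → X))
    (hS : ∀ f ∈ S, ∀ (α : κ) (q : X), Function.update f α q ∈ S) :
    OHD ↥S := by
  classical
  rintro ⟨V, x, hVo, hVne, hconv⟩
  choose W hWo hWV using fun n => isOpen_induced_iff.mp (hVo n)
  choose f hf using hVne
  have hfW : ∀ n, ((f n : ↥S) : κ → X) ∈ W n := by
    intro n
    have := hf n
    rw [← hWV n] at this
    exact this
  choose I u hu hIW using fun n => isOpen_pi_iff.mp (hWo n) _ (hfW n)
  obtain ⟨α, hα⟩ : ∃ α : κ, α ∉ ⋃ n, (I n : Set κ) := by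
    by_contra h
    push_neg at h
    have h1 : (Set.univ : Set κ).Countable := by
      rw [← Set.eq_univ_of_forall h]
      exact Set.countable_iUnion fun n => (I n).countable_toSet
    exact not_countable (Set.countable_univ_iff.mp h1)
  obtain ⟨q, hq⟩ := exists_ne ((x : κ → X) α)
  obtain ⟨m, hm⟩ := hconv (Subtype.val ⁻¹' ((fun y : κ → X => y α) ⁻¹' {q}ᶜ))
    (((isOpen_compl_singleton.preimage (continuous_apply α))).preimage continuous_subtype_val)
    (by simpa using hq.symm)
  set b : κ → X := Function.update ((f m : ↥S) : κ → X) α q with hbdef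
  have hbS : b ∈ S := hS _ (f m).2 α q
  have hb : b ∈ (I m : Set κ).pi (u m) := by
    intro i hi
    have hne : i ≠ α := fun h => hα (Set.mem_iUnion.mpr ⟨m, h ▸ hi⟩)
    rw [hbdef, Function.update_of_ne hne]
    exact (hu m i hi).2
  have hbV : (⟨b, hbS⟩ : ↥S) ∈ V m := by
    rw [← hWV m]
    exact hIW m hb
  have h2 := hm m le_rfl hbV
  simp [hbdef, Function.update_self] at h2

lemma aux9_exists_conv_seq {X : Type*} [TopologicalSpace X] (p : X)
    {U : ℕ → Set X} (hUo : ∀ n, IsOpen (U n)) (hUne : ∀ n, (U n).Nonempty)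
    (hUc : OpenSeqTendsto U p)
    (κ : Type*) [Countable κ] [Infinite κ] :
    ∃ V : ℕ → Set (κ → X), (∀ n, IsOpen (V n)) ∧
      (∀ n, ∃ x ∈ V n, {α : κ | x α ≠ p}.Finite) ∧
      OpenSeqTendsto V (fun _ => p) := by
  classical
  obtain ⟨e⟩ : Nonempty (κ ≃ ℕ) := nonempty_equiv_of_countable
  refine ⟨fun n => ⋂ i ∈ Finset.range n, (fun x : κ → X => x (e.symm i)) ⁻¹' U n,
    ?_, ?_, ?_⟩
  · intro n
    exact isOpen_biInter_finset fun i _ => (hUo n).preimage (continuous_apply _)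
  · intro n
    obtain ⟨v, hv⟩ := hUne n
    refine ⟨fun α => if e α < n then v else p, ?_, ?_⟩
    · simp only [Set.mem_iInter, Set.mem_preimage, Finset.mem_range]
      intro i hi
      simp [Equiv.apply_symm_apply, hi, hv]
    · apply Set.Finite.subset ((Set.finite_Iio n).preimage e.injective.injOn)
      intro α hα
      simp only [Set.mem_setOf_eq] at hα
      by_contra h
      simp only [Set.mem_preimage, Set.mem_Iio, not_lt] at h
      exact hα (if_neg (not_lt.mpr h))
  · intro O hO hpO
    obtain ⟨I, u, hu, hIO⟩ := isOpen_pi_iff.mp hO _ hpO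
    choose m hm using fun i (hi : i ∈ I) => hUc (u i) (hu i hi).1 (hu i hi).2
    set M : ℕ := (I.sup fun i => e i + 1) ⊔
      (I.sup fun i => if h : i ∈ I then m i h else 0) with hM
    refine ⟨M, fun n hn x hx => hIO ?_⟩
    intro i hi
    have h1 : e i < n := by
      have : e i + 1 ≤ M := le_sup_of_le_left (Finset.le_sup (f := fun i => e i + 1) hi)
      omega
    have h2 : m i hi ≤ n := by
      have : (if h : i ∈ I then m i h else 0) ≤ M :=
        le_sup_of_le_right (Finset.le_sup (f := fun i => if h : i ∈ I then m i h else 0) hi)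
      rw [dif_pos (show i ∈ I from hi)] at this
      omega
    simp only [Set.mem_iInter, Set.mem_preimage, Finset.mem_range] at hx
    have := hx (e i) h1
    rw [Equiv.symm_apply_apply] at this
    exact hm i hi n h2 this

end AuxStatement9

theorem statement9 {X : Type*} [TopologicalSpace X] [RegularSpace X] [T1Space X] [Nontrivial X]
    (p : X)
    (hp : ∃ U : ℕ → Set X, (∀ n, IsOpen (U n)) ∧ (∀ n, (U n).Nonempty) ∧ OpenSeqTendsto U p)
    (κ : Type*) [Infinite κ] :
    List.TFAE [OHD (κ → X), OHD ↥(SigmaProd X p κ), OHD ↥(SmallSigmaProd X p κ),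
      Uncountable κ] := by
  classical
  obtain ⟨U, hUo, hUne, hUc⟩ := hp
  have hupdate : ∀ (f : κ → X) (α : κ) (q : X),
      {β : κ | Function.update f α q β ≠ p} ⊆ insert α {β : κ | f β ≠ p} := by
    intro f α q β hβ
    rcases eq_or_ne β α with h | h
    · exact Set.mem_insert_iff.mpr (Or.inl h)
    · right
      simp only [Set.mem_setOf_eq, Function.update_of_ne h] at hβ ⊢
      exact hβ
  have notOHD : ∀ (S : Set (κ → X)), Countable κ → ((fun _ => p) ∈ S) →
      (∀ x : κ → X, {α : κ | x α ≠ p}.Finite → x ∈ S) → ¬ OHD ↥S := by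
    intro S hcnt hpS hfin h
    haveI := hcnt
    obtain ⟨V, hVo, hVne, hVc⟩ := aux9_exists_conv_seq p hUo hUne hUc κ
    refine h ⟨fun n => Subtype.val ⁻¹' V n, ⟨fun _ => p, hpS⟩,
      fun n => (hVo n).preimage continuous_subtype_val, ?_, ?_⟩
    · intro n
      obtain ⟨x, hxV, hxF⟩ := hVne n
      exact ⟨⟨x, hfin x hxF⟩, hxV⟩
    · intro O hO hmem
      obtain ⟨W, hWo, hWeq⟩ := isOpen_induced_iff.mp hO
      rw [← hWeq] at hmem
      obtain ⟨M, hM⟩ := hVc W hWo hmem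
      exact ⟨M, fun n hn y hy => by rw [← hWeq]; exact hM n hn hy⟩
  tfae_have 4 → 1 := by
    intro h
    haveI := h
    exact aux9_ohd_pi_of_uncountable κ
  tfae_have 4 → 2 := by
    intro h
    haveI := h
    refine aux9_ohd_subtype_of_uncountable (SigmaProd X p κ) ?_
    intro f hf α q
    exact ((hf.insert α).mono (hupdate f α q))
  tfae_have 4 → 3 := by
    intro h
    haveI := h
    refine aux9_ohd_subtype_of_uncountable (SmallSigmaProd X p κ) ?_
    intro f hf α q
    exact ((hf.insert α).subset (hupdate f α q))
  tfae_have 1 → 4 := by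
    intro h
    by_contra hk
    rw [not_uncountable_iff] at hk
    obtain ⟨V, hVo, hVne, hVc⟩ := aux9_exists_conv_seq p hUo hUne hUc κ
    exact h ⟨V, fun _ => p, hVo, fun n => (hVne n).imp (fun x hx => hx.1), hVc⟩
  tfae_have 2 → 4 := by
    intro h
    by_contra hk
    rw [not_uncountable_iff] at hk
    exact notOHD (SigmaProd X p κ) hk (by simp [SigmaProd])
      (fun x hx => hx.countable) h
  tfae_have 3 → 4 := by
    intro h
    by_contra hk
    rw [not_uncountable_iff] at hk
    exact notOHD (SmallSigmaProd X p κ) hk (by simp [SmallSigmaProd])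
      (fun x hx => hx) h
  tfae_finish
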